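/- Given a VDPA M, there exists a DFA M' over the stack-aware alphabet Σ' with the same state set such that for every well-matched word w, M accepts w if and only if M' accepts T(w). -/
import Mathlib


inductive Kind : Type
  | call | ret | internal
deriving DecidableEq

def callCount {α : Type} (k : α → Kind) (w : List α) : ℕ :=
  w.countP (fun a => decide (k a = Kind.call))

def retCount {α : Type} (k : α → Kind) (w : List α) : ℕ :=
  w.countP (fun a => decide (k a = Kind.ret))

/-- A word is well-matched if every prefix has at least as many call symbols as
return symbols, and the total numbers of call and return symbols are equal. -/
def WellMatched {α : Type} (k : α → Kind) (w : List α) : Prop :=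
  (∀ p, p <+: w → retCount k p ≤ callCount k p) ∧ callCount k w = retCount k w

/-- The stack-aware transformation, carrying the stack of unmatched call symbols. -/
def Tgo {α : Type} (k : α → Kind) : List α → List α → List (α ⊕ α × α)
  | _, [] => []
  | st, a :: rest =>
    match k a with
    | Kind.call => Sum.inl a :: Tgo k (a :: st) rest
    | Kind.internal => Sum.inl a :: Tgo k st rest
    | Kind.ret =>
      match st with
      | [] => Sum.inl a :: Tgo k [] rest
      | c :: s => Sum.inr (a, c) :: Tgo k s rest

/-- The stack-aware transformation: each return symbol `r` is replaced by the pair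
`(r, c)` where `c` is its matching call symbol; other symbols are kept. -/
def T {α : Type} (k : α → Kind) (w : List α) : List (α ⊕ α × α) :=
  Tgo k [] w

/-- The stack of unmatched call symbols (head = top) after processing `w`. -/
def stackAfter {α : Type} (k : α → Kind) (w : List α) : List α :=
  w.foldl
    (fun st a =>
      match k a with
      | Kind.call => a :: st
      | Kind.ret => st.tail
      | Kind.internal => st) []

/-- A visibly deterministic pushdown automaton. -/
structure VDPA (α Q : Type) where
  kind : α → Kind
  δcall : Q → α → Q
  δint : Q → α → Q
  /-- return transition: state, input, popped top-of-stack symbol -/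
  δret : Q → α → α → Q
  q0 : Q
  F : Set Q

/-- One step of the VDPA on a configuration; `none` means the run has failed
(a pop from the empty stack occurred). -/
def VDPA.step {α Q : Type} (M : VDPA α Q) :
    Option (Q × List α) → α → Option (Q × List α)
  | none, _ => none
  | some (q, st), a =>
    match M.kind a with
    | Kind.call => some (M.δcall q a, a :: st)
    | Kind.internal => some (M.δint q a, st)
    | Kind.ret =>
      match st with
      | [] => none
      | c :: s => some (M.δret q a c, s)

def VDPA.run {α Q : Type} (M : VDPA α Q) (w : List α) : Option (Q × List α) :=
  w.foldl M.step (some (M.q0, []))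

/-- `M` accepts `w` iff processing succeeds and ends in an accepting state with empty stack. -/
def VDPA.Accepts {α Q : Type} (M : VDPA α Q) (w : List α) : Prop :=
  ∃ q ∈ M.F, M.run w = some (q, [])


def delta' {α Q : Type} (M : VDPA α Q) : Q → (α ⊕ α × α) → Q
  | q, Sum.inl a =>
    match M.kind a with
    | Kind.call => M.δcall q a
    | Kind.internal => M.δint q a
    | Kind.ret => q
  | q, Sum.inr (a, c) => M.δret q a c

def sfold {α : Type} (k : α → Kind) (st : List α) (w : List α) : List α :=
  w.foldl (fun st a => match k a with
    | Kind.call => a :: st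
    | Kind.ret => st.tail
    | Kind.internal => st) st

lemma main_lemma {α Q : Type} (M : VDPA α Q) :
    ∀ (w : List α) (q : Q) (st : List α),
    (∀ p, p <+: w → retCount M.kind p ≤ callCount M.kind p + st.length) →
    w.foldl M.step (some (q, st)) =
      some ((Tgo M.kind st w).foldl (delta' M) q, sfold M.kind st w) ∧
    (sfold M.kind st w).length + retCount M.kind w = st.length + callCount M.kind w := by
  intro w
  induction w with
  | nil => intro q st _; simp [Tgo, sfold, retCount, callCount]
  | cons a rest ih =>
    intro q st hyp
    have hpre : ∀ p, p <+: rest → (a :: p) <+: (a :: rest) := by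
      intro p hp
      obtain ⟨t, ht⟩ := hp
      exact ⟨t, by simp [ht]⟩
    cases h : M.kind a with
    | call =>
      have := ih (M.δcall q a) (a :: st) (by
        intro p hp
        have := hyp (a :: p) (hpre p hp)
        simp [retCount, callCount, List.countP_cons, h] at this ⊢
        omega)
      constructor
      · simpa [Tgo, sfold, VDPA.step, delta', h] using this.1
      · have h2 := this.2
        simp [retCount, callCount, List.countP_cons, h, sfold] at h2 ⊢
        omega
    | internal =>
      have := ih (M.δint q a) st (by
        intro p hp
        have := hyp (a :: p) (hpre p hp)
        simp [retCount, callCount, List.countP_cons, h] at this ⊢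
        omega)
      constructor
      · simpa [Tgo, sfold, VDPA.step, delta', h] using this.1
      · have h2 := this.2
        simp [retCount, callCount, List.countP_cons, h, sfold] at h2 ⊢
        omega
    | ret =>
      have hne : st ≠ [] := by
        have := hyp [a] ⟨rest, rfl⟩
        simp [retCount, callCount, List.countP_cons, h] at this
        intro hst; rw [hst] at this; simp at this
      obtain ⟨c, s, rfl⟩ : ∃ c s, st = c :: s := by
        cases st with
        | nil => exact absurd rfl hne
        | cons c s => exact ⟨c, s, rfl⟩
      have := ih (M.δret q a c) s (by
        intro p hp
        have := hyp (a :: p) (hpre p hp)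
        simp [retCount, callCount, List.countP_cons, h] at this ⊢
        omega)
      constructor
      · simpa [Tgo, sfold, VDPA.step, delta', h] using this.1
      · have h2 := this.2
        simp [retCount, callCount, List.countP_cons, h, sfold] at h2 ⊢
        omega

/-- For any VDPA `M` there is a DFA over the stack-aware alphabet, with the same
state set `Q`, initial state `M.q0` and accepting states `M.F`, that accepts
`T w` exactly when `M` accepts `w`, for every well-matched word `w`. -/
theorem vdpa_to_dfa {α Q : Type} (M : VDPA α Q) :
    ∃ δ' : Q → (α ⊕ α × α) → Q,
      ∀ w : List α, WellMatched M.kind w →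
        (M.Accepts w ↔ (T M.kind w).foldl δ' M.q0 ∈ M.F) := by
  refine ⟨delta' M, fun w hw => ?_⟩
  obtain ⟨hpre, htot⟩ := hw
  have key := main_lemma M w M.q0 [] (by
    intro p hp; simpa using hpre p hp)
  have hlen : (sfold M.kind [] w).length = 0 := by
    have := key.2; simp at this; omega
  have hnil : sfold M.kind [] w = [] := List.length_eq_zero_iff.mp hlen
  have hrun : M.run w = some ((T M.kind w).foldl (delta' M) M.q0, []) := by
    rw [VDPA.run, key.1, hnil]; rfl
  constructor
  · rintro ⟨q, hq, hq2⟩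
    rw [hrun] at hq2
    obtain ⟨h1, -⟩ := Prod.mk.injEq .. ▸ Option.some_inj.mp hq2
    exact h1 ▸ hq
  · intro hmem
    exact ⟨_, hmem, hrun⟩
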